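/- Let F = {x^{v_1},...,x^{v_q}} be a finite set of monomials of the same degree d ≥ 2 in k[x_1,...,x_n]. The following are equivalent: (a) k[F] ⊆ k[x_d] is birational; (b) ℤ^n/ℤ⟨v_1 - v_j : 2 ≤ j ≤ q⟩ is free of rank 1; (c) the log-matrix A has rank n and ℤ⟨v_1 - v_j : 2 ≤ j ≤ q⟩ = ℤ⟨e_1 - e_k : 2 ≤ k ≤ n⟩. -/

import Mathlib

open MvPolynomial

/-- The fraction field (inside `Frac(k[x])`) of the subalgebra generated by a set of
polynomials. -/
noncomputable def fractionFieldOf (n : ℕ) (k : Type*) [Field k]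
    (S : Set (MvPolynomial (Fin n) k)) :
    Subfield (FractionRing (MvPolynomial (Fin n) k)) :=
  Subfield.closure
    ((algebraMap (MvPolynomial (Fin n) k) (FractionRing (MvPolynomial (Fin n) k))) ''
      (Algebra.adjoin k S : Set (MvPolynomial (Fin n) k)))


section LinAlg
variable (n : ℕ) [NeZero n]

def sumHomZ : (Fin n → ℤ) →ₗ[ℤ] ℤ where
  toFun u := ∑ i, u i
  map_add' a b := by simp [Finset.sum_add_distrib]
  map_smul' c a := by simp [Finset.mul_sum]

def Wset : Set (Fin n → ℤ) :=
  {w : Fin n → ℤ | ∃ k' : Fin n, k' ≠ 0 ∧ w = Pi.single 0 1 - Pi.single k' 1}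

lemma mem_spanW_of_sum_zero (u : Fin n → ℤ) (hu : ∑ i, u i = 0) :
    u ∈ Submodule.span ℤ (Wset n) := by
  have key : u = ∑ i, (-(u i)) • ((Pi.single (0 : Fin n) (1:ℤ) - Pi.single i (1:ℤ) : Fin n → ℤ)) := by
    funext j
    simp only [Finset.sum_apply, Pi.smul_apply, Pi.sub_apply, smul_eq_mul,
      Pi.single_apply, mul_sub, Finset.sum_sub_distrib, neg_mul, mul_ite, mul_one, mul_zero,
      neg_zero, Finset.sum_ite_eq, Finset.mem_univ, if_true, neg_neg]
    rcases eq_or_ne j 0 with h | h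
    · subst h
      simp [Finset.sum_neg_distrib, hu]
    · simp [h, Ne.symm h]
  rw [key]
  refine Submodule.sum_mem _ fun i _ => Submodule.smul_mem _ _ ?_
  rcases eq_or_ne i 0 with h | h
  · subst h; simp
  · exact Submodule.subset_span ⟨i, h, rfl⟩

omit [NeZero n] in
lemma sum_single_sub (a b : Fin n) :
    sumHomZ n (Pi.single a 1 - Pi.single b 1) = 0 := by
  simp [sumHomZ, Finset.sum_sub_distrib, Pi.single_apply, Finset.sum_ite_eq']

lemma spanW_eq_ker : Submodule.span ℤ (Wset n) = LinearMap.ker (sumHomZ n) := by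
  apply le_antisymm
  · rw [Submodule.span_le]
    rintro w ⟨k', -, rfl⟩
    exact sum_single_sub n 0 k'
  · intro u hu
    exact mem_spanW_of_sum_zero n u hu

lemma sumHomZ_surjective : Function.Surjective (sumHomZ n) := fun c =>
  ⟨Pi.single 0 c, by simp [sumHomZ, Pi.single_apply, Finset.sum_ite_eq']⟩

noncomputable def quotWEquiv : ((Fin n → ℤ) ⧸ Submodule.span ℤ (Wset n)) ≃ₗ[ℤ] ℤ :=
  (Submodule.quotEquivOfEq _ _ (spanW_eq_ker n)).trans
    ((sumHomZ n).quotKerEquivOfSurjective (sumHomZ_surjective n))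

end LinAlg

lemma single_eq_smul_single (n : ℕ) (i : Fin n) (c : ℚ) :
    (Pi.single i c : Fin n → ℚ) = c • (Pi.single i (1:ℚ) : Fin n → ℚ) := by
  funext j
  simp [Pi.single_apply, mul_ite]

lemma rank_log_matrix (n q d : ℕ) [NeZero n] (hd0 : d ≠ 0)
    (v : Fin (q + 1) → (Fin n →₀ ℕ)) (hdeg : ∀ j, ∑ i, v j i = d)
    (hVW : Submodule.span ℤ (Set.range fun j : Fin q =>
        (fun i => ((v 0) i : ℤ)) - (fun i => ((v j.succ) i : ℤ)))
      = Submodule.span ℤ (Wset n)) :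
    (Matrix.of fun (i : Fin n) (j : Fin (q + 1)) => ((v j) i : ℚ) :
      Matrix (Fin n) (Fin (q + 1)) ℚ).rank = n := by
  set A : Matrix (Fin n) (Fin (q+1)) ℚ := Matrix.of fun i j => ((v j) i : ℚ) with hA
  set S : Submodule ℚ (Fin n → ℚ) := Submodule.span ℚ (Set.range A.transpose) with hS
  have hcol : ∀ j : Fin (q+1), (fun i => ((v j) i : ℚ)) ∈ S := by
    intro j
    exact Submodule.subset_span ⟨j, rfl⟩
  have hcast : ∀ x : Fin n → ℤ, x ∈ Submodule.span ℤ (Set.range fun j : Fin q =>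
      (fun i => ((v 0) i : ℤ)) - (fun i => ((v j.succ) i : ℤ))) →
      (fun i => ((x i : ℚ))) ∈ S := by
    intro x hx
    rw [Submodule.mem_span_range_iff_exists_fun] at hx
    obtain ⟨m, hm⟩ := hx
    have hxe : (fun i => ((x i : ℚ))) = ∑ j : Fin q, ((m j : ℚ)) •
        ((fun i => ((v 0) i : ℚ)) - (fun i => ((v j.succ) i : ℚ))) := by
      funext i
      rw [← hm]
      simp only [Finset.sum_apply, Pi.smul_apply, Pi.sub_apply, smul_eq_mul]
      push_cast
      ring
    rw [hxe]
    exact Submodule.sum_mem _ fun j _ => Submodule.smul_mem _ _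
      (Submodule.sub_mem _ (hcol 0) (hcol j.succ))
  have hgen : ∀ k' : Fin n, (Pi.single 0 1 - Pi.single k' 1 : Fin n → ℚ) ∈ S := by
    intro k'
    rcases eq_or_ne k' 0 with h | h
    · simp [h]
    · have hz : (Pi.single 0 1 - Pi.single k' 1 : Fin n → ℤ) ∈
          Submodule.span ℤ (Set.range fun j : Fin q =>
          (fun i => ((v 0) i : ℤ)) - (fun i => ((v j.succ) i : ℤ))) := by
        rw [hVW]
        exact Submodule.subset_span ⟨k', h, rfl⟩
      have := hcast _ hz
      convert this using 1
      funext i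
      simp only [Pi.sub_apply, Pi.single_apply, Int.cast_sub,
        apply_ite (fun z : ℤ => (z : ℚ)), Int.cast_one, Int.cast_zero]
  have h0 : (Pi.single 0 1 : Fin n → ℚ) ∈ S := by
    have key : (d : ℚ) • (Pi.single 0 1 : Fin n → ℚ)
        = (fun i => ((v 0) i : ℚ)) + ∑ kk : Fin n, ((v 0) kk : ℚ) •
          (Pi.single 0 1 - Pi.single kk 1 : Fin n → ℚ) := by
      funext i
      simp only [Pi.add_apply, Finset.sum_apply, Pi.smul_apply, Pi.sub_apply, smul_eq_mul,
        Pi.single_apply, mul_sub, Finset.sum_sub_distrib, mul_ite, mul_one, mul_zero,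
        Finset.sum_ite_eq, Finset.mem_univ, if_true]
      have hsum : ∑ kk : Fin n, ((v 0) kk : ℚ) = (d : ℚ) := by
        rw [← hdeg 0]; push_cast; ring
      rcases eq_or_ne i 0 with h | h
      · subst h; simp [hsum]
      · simp [h, Ne.symm h, eq_comm]
    have hd' : (d : ℚ) ≠ 0 := by exact_mod_cast hd0
    have : (Pi.single 0 1 : Fin n → ℚ) = (d : ℚ)⁻¹ • ((d:ℚ) • (Pi.single 0 1 : Fin n → ℚ)) := by
      rw [smul_smul, inv_mul_cancel₀ hd', one_smul]
    rw [this, key]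
    exact Submodule.smul_mem _ _ (Submodule.add_mem _ (hcol 0)
      (Submodule.sum_mem _ fun kk _ => Submodule.smul_mem _ _ (hgen kk)))
  have hsingle : ∀ i : Fin n, (Pi.single i 1 : Fin n → ℚ) ∈ S := by
    intro i
    have : (Pi.single i 1 : Fin n → ℚ) = Pi.single 0 1 - (Pi.single 0 1 - Pi.single i 1) := by ring
    rw [this]
    exact Submodule.sub_mem _ h0 (hgen i)
  have htop : S = ⊤ := by
    rw [eq_top_iff]
    intro x _
    have : x = ∑ i, (x i) • (Pi.single i 1 : Fin n → ℚ) := by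
      conv_lhs => rw [← Finset.univ_sum_single x]
      exact Finset.sum_congr rfl fun i _ => single_eq_smul_single n i (x i)
    rw [this]
    exact Submodule.sum_mem _ fun i _ => Submodule.smul_mem _ _ (hsingle i)
  rw [Matrix.rank_eq_finrank_span_cols, show Set.range A.col = Set.range A.transpose from rfl, ← hS, htop, finrank_top, Module.finrank_pi]
  simp

section FieldPart
variable (n : ℕ) (k : Type*) [Field k]

local notation "R" => MvPolynomial (Fin n) k
local notation "K" => FractionRing (MvPolynomial (Fin n) k)
local notation "ι" => algebraMap (MvPolynomial (Fin n) k) (FractionRing (MvPolynomial (Fin n) k))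

lemma iota_inj : Function.Injective (ι) := IsFractionRing.injective _ _

lemma X_ne_zero' (i : Fin n) : (ι) (X i) ≠ 0 := by
  intro h
  have : (X i : R) = 0 := iota_inj n k (by simpa using h)
  exact MvPolynomial.X_ne_zero i this

/-- Laurent monomial map. -/
noncomputable def Phi (u : Fin n → ℤ) : K := ∏ i, ((ι) (X i)) ^ (u i)

lemma Phi_add (a b : Fin n → ℤ) : Phi n k (a + b) = Phi n k a * Phi n k b := by
  rw [Phi, Phi, Phi, ← Finset.prod_mul_distrib]
  exact Finset.prod_congr rfl fun i _ => zpow_add₀ (X_ne_zero' n k i) _ _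

lemma Phi_zero : Phi n k 0 = 1 := by simp [Phi]

lemma Phi_neg (a : Fin n → ℤ) : Phi n k (-a) = (Phi n k a)⁻¹ := by
  rw [Phi, Phi, ← Finset.prod_inv_distrib]
  exact Finset.prod_congr rfl fun i _ => zpow_neg _ _

lemma Phi_sub (a b : Fin n → ℤ) : Phi n k (a - b) = Phi n k a * (Phi n k b)⁻¹ := by
  rw [sub_eq_add_neg, Phi_add, Phi_neg]

lemma Phi_zsmul (c : ℤ) (a : Fin n → ℤ) : Phi n k (c • a) = (Phi n k a) ^ c := by
  rw [Phi, Phi, ← Finset.prod_zpow]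
  exact Finset.prod_congr rfl fun i _ => by
    rw [Pi.smul_apply, smul_eq_mul, mul_comm, zpow_mul]

lemma Phi_sum {α : Type*} (s : Finset α) (c : α → ℤ) (a : α → Fin n → ℤ) :
    Phi n k (∑ j ∈ s, c j • a j) = ∏ j ∈ s, (Phi n k (a j)) ^ (c j) := by
  classical
  induction s using Finset.induction with
  | empty => simp [Phi_zero]
  | @insert a s h ih => rw [Finset.sum_insert h, Phi_add, ih, Finset.prod_insert h, Phi_zsmul]

lemma Phi_monomial (u : Fin n →₀ ℕ) :
    (ι) (monomial u (1:k)) = Phi n k (fun i => (u i : ℤ)) := by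
  rw [Phi]
  have : (monomial u (1:k)) = ∏ i : Fin n, (X i ^ u i : MvPolynomial (Fin n) k) := by
    rw [monomial_eq, C_1, one_mul]
    exact Finsupp.prod_fintype _ _ fun i => pow_zero _
  rw [this, map_prod]
  exact Finset.prod_congr rfl fun i _ => by rw [map_pow]; exact (zpow_natCast _ _).symm

/-- If the exponent difference lies in the lattice, the monomial lies in any subfield
containing the images of the generators. -/
lemma gen_mem_subfield {q : ℕ} (v : Fin (q + 1) → (Fin n →₀ ℕ))
    (E : Subfield (FractionRing (MvPolynomial (Fin n) k)))
    (hE : ∀ j, (ι) (monomial (v j) (1:k)) ∈ E) (w : Fin n →₀ ℕ)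
    (hw : ((fun i => (w i : ℤ)) - (fun i => (v 0 i : ℤ))) ∈ Submodule.span ℤ
      (Set.range fun j : Fin q =>
        (fun i => ((v 0) i : ℤ)) - (fun i => ((v j.succ) i : ℤ)))) :
    (ι) (monomial w (1:k)) ∈ E := by
  rw [Submodule.mem_span_range_iff_exists_fun] at hw
  obtain ⟨c, hc⟩ := hw
  have hrep : (fun i => (w i : ℤ)) = (fun i => (v 0 i : ℤ)) +
      ∑ j : Fin q, c j • ((fun i => ((v 0) i : ℤ)) - (fun i => ((v j.succ) i : ℤ))) := by
    rw [hc]; abel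
  have hPhi : ∀ j : Fin (q+1), Phi n k (fun i => (v j i : ℤ)) ∈ E := fun j => by
    rw [← Phi_monomial]; exact hE j
  rw [Phi_monomial, hrep, Phi_add, Phi_sum]
  refine E.mul_mem (hPhi 0) (Subfield.prod_mem E fun j _ => Subfield.zpow_mem E ?_ _)
  rw [Phi_sub]
  exact E.mul_mem (hPhi 0) (E.inv_mem (hPhi j.succ))

/-- membership criterion for `fractionFieldOf`. -/
lemma mem_fractionFieldOf_iff (S : Set (MvPolynomial (Fin n) k))
    (x : FractionRing (MvPolynomial (Fin n) k)) :
    x ∈ fractionFieldOf n k S ↔ ∃ f ∈ Algebra.adjoin k S, ∃ g ∈ Algebra.adjoin k S,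
      (ι) f / (ι) g = x := by
  rw [fractionFieldOf, Subfield.mem_closure_iff]
  have hset : ((ι) '' (Algebra.adjoin k S : Set (MvPolynomial (Fin n) k)))
      = ((Algebra.adjoin k S).toSubring.map (ι) : Set (FractionRing (MvPolynomial (Fin n) k))) := by
    rw [Subring.coe_map, Subalgebra.coe_toSubring]
  rw [hset, Subring.closure_eq]
  constructor
  · rintro ⟨y, hy, z, hz, hyz⟩
    obtain ⟨f, hf, rfl⟩ := hy
    obtain ⟨g, hg, rfl⟩ := hz
    exact ⟨f, hf, g, hg, hyz⟩
  · rintro ⟨f, hf, g, hg, hyz⟩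
    exact ⟨(ι) f, ⟨f, hf, rfl⟩, (ι) g, ⟨g, hg, rfl⟩, hyz⟩

lemma mem_fractionFieldOf_of_adjoin (S : Set (MvPolynomial (Fin n) k))
    {p : MvPolynomial (Fin n) k} (hp : p ∈ Algebra.adjoin k S) :
    (ι) p ∈ fractionFieldOf n k S :=
  Subfield.subset_closure ⟨p, hp, rfl⟩

/-- elements of the monomial algebra are supported on the monoid. -/
lemma support_adjoin_monomials {ι' : Type*} (vv : ι' → (Fin n →₀ ℕ))
    {p : MvPolynomial (Fin n) k}
    (hp : p ∈ Algebra.adjoin k (Set.range fun j => monomial (vv j) (1:k))) :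
    ∀ u ∈ p.support, u ∈ AddSubmonoid.closure (Set.range vv) := by
  classical
  set M := AddSubmonoid.closure (Set.range vv)
  let T : Subalgebra k (MvPolynomial (Fin n) k) :=
    { carrier := {p | ∀ u ∈ p.support, u ∈ M}
      mul_mem' := by
        intro a b ha hb u hu
        obtain ⟨y, hy, z, hz, rfl⟩ := Finset.mem_add.mp (MvPolynomial.support_mul a b hu)
        exact M.add_mem (ha y hy) (hb z hz)
      add_mem' := by
        intro a b ha hb u hu
        rcases Finset.mem_union.mp (MvPolynomial.support_add hu) with h | h
        · exact ha u h
        · exact hb u h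
      algebraMap_mem' := by
        intro c u hu
        have : (algebraMap k (MvPolynomial (Fin n) k) c) = monomial 0 c := by
          rw [MvPolynomial.algebraMap_eq, ← MvPolynomial.monomial_zero']
        rw [this, support_monomial] at hu
        by_cases hc : c = 0
        · simp [hc] at hu
        · simp only [hc, if_false, Finset.mem_singleton] at hu
          rw [hu]; exact M.zero_mem }
  have hle : Algebra.adjoin k (Set.range fun j => monomial (vv j) (1:k)) ≤ T := by
    rw [Algebra.adjoin_le_iff]
    rintro p ⟨j, rfl⟩ u hu
    rw [support_monomial] at hu
    simp only [one_ne_zero, if_false, Finset.mem_singleton] at hu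
    rw [hu]
    exact AddSubmonoid.subset_closure ⟨j, rfl⟩
  exact hle hp

lemma cast_mem_span_of_closure {ι' : Type*} (vv : ι' → (Fin n →₀ ℕ))
    {u : Fin n →₀ ℕ} (hu : u ∈ AddSubmonoid.closure (Set.range vv)) :
    (fun i => (u i : ℤ)) ∈ Submodule.span ℤ (Set.range fun j => (fun i => ((vv j) i : ℤ))) := by
  induction hu using AddSubmonoid.closure_induction with
  | mem x hx =>
      obtain ⟨j, rfl⟩ := hx
      exact Submodule.subset_span ⟨j, rfl⟩
  | zero => -- zero case
      have : (fun i => ((0 : Fin n →₀ ℕ) i : ℤ)) = (0 : Fin n → ℤ) := by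
        funext i; simp
      rw [this]; exact Submodule.zero_mem _
  | add a b ha hb iha ihb =>
      have : (fun i => ((a + b : Fin n →₀ ℕ) i : ℤ))
          = (fun i => (a i : ℤ)) + (fun i => (b i : ℤ)) := by
        funext i; simp
      rw [this]; exact Submodule.add_mem _ iha ihb

end FieldPart

noncomputable def freeRankOneEquiv (M : Type*) [AddCommGroup M] [Module ℤ M]
    (hfree : Module.Free ℤ M) (h : Module.rank ℤ M = 1) : M ≃ₗ[ℤ] ℤ := by
  haveI := hfree
  have hcard : Cardinal.mk (Module.Free.ChooseBasisIndex ℤ M) = 1 := by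
    rw [← Module.Free.rank_eq_card_chooseBasisIndex, h]
  rw [Cardinal.eq_one_iff_unique] at hcard
  obtain ⟨hs, hn⟩ := hcard
  haveI := hs
  haveI : Unique (Module.Free.ChooseBasisIndex ℤ M) := uniqueOfSubsingleton (Classical.choice hn)
  exact (Module.Free.chooseBasis ℤ M).repr.trans (Finsupp.LinearEquiv.finsuppUnique ℤ ℤ _)

lemma int_surj_inj (f : ℤ →ₗ[ℤ] ℤ) (hf : Function.Surjective f) : Function.Injective f := by
  obtain ⟨a, ha⟩ := hf 1
  have h1 : ∀ x : ℤ, f x = x * f 1 := fun x => by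
    conv_lhs => rw [show x = x • (1:ℤ) by simp, map_smul]
    simp [mul_comm]
  have hne : f 1 ≠ 0 := fun h0 => by rw [h1 a, h0, mul_zero] at ha; exact one_ne_zero ha.symm
  intro x y hxy
  rw [h1 x, h1 y] at hxy
  exact mul_right_cancel₀ hne hxy

/-- An element of the lattice generated by the `v j` with coordinate sum zero lies in the
span of the differences. -/
lemma mem_diffspan_of_sum_zero (n q d : ℕ) (hd0 : d ≠ 0)
    (v : Fin (q + 1) → (Fin n →₀ ℕ)) (hdeg : ∀ j, ∑ i, v j i = d)
    (x : Fin n → ℤ)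
    (hx : x ∈ Submodule.span ℤ (Set.range fun j : Fin (q+1) => (fun i => ((v j) i : ℤ))))
    (hsum : ∑ i, x i = 0) :
    x ∈ Submodule.span ℤ (Set.range fun j : Fin q =>
      (fun i => ((v 0) i : ℤ)) - (fun i => ((v j.succ) i : ℤ))) := by
  rw [Submodule.mem_span_range_iff_exists_fun] at hx
  obtain ⟨m, hm⟩ := hx
  have hmsum : ∑ j, m j = 0 := by
    have h1 : ∑ i, x i = (∑ j, m j) * (d : ℤ) := by
      rw [← hm]
      simp only [Finset.sum_apply, Pi.smul_apply, smul_eq_mul]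
      rw [Finset.sum_comm, Finset.sum_mul]
      refine Finset.sum_congr rfl fun j _ => ?_
      rw [← Finset.mul_sum]
      congr 1
      rw [← hdeg j]
      push_cast
      rfl
    rw [hsum] at h1
    have hd' : (d : ℤ) ≠ 0 := by exact_mod_cast hd0
    exact (mul_eq_zero.mp h1.symm).resolve_right hd'
  have key : x = ∑ j : Fin q, (-(m j.succ)) •
      ((fun i => ((v 0) i : ℤ)) - (fun i => ((v j.succ) i : ℤ))) := by
    have h2 : x = ∑ j : Fin (q+1), m j • ((fun i => ((v j) i : ℤ)) - (fun i => ((v 0) i : ℤ))) := by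
      rw [← hm]
      rw [Finset.sum_congr rfl fun (j : Fin (q+1)) _ => smul_sub (m j)
        ((fun i => ((v j) i : ℤ))) ((fun i => ((v 0) i : ℤ)))]
      rw [Finset.sum_sub_distrib, ← Finset.sum_smul, hmsum, zero_smul, sub_zero]
    rw [h2, Fin.sum_univ_succ]
    simp only [sub_self, smul_zero, zero_add]
    refine Finset.sum_congr rfl fun j _ => ?_
    rw [neg_smul, ← smul_neg, neg_sub]
  rw [key]
  exact Submodule.sum_mem _ fun j _ => Submodule.smul_mem _ _ (Submodule.subset_span ⟨j, rfl⟩)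

/-- For monomials `x^{v_1},…,x^{v_{q+1}}` of the same degree `d ≥ 2` the following are
equivalent: (a) `k[F] ⊆ k[x_d]` is birational; (b) `ℤ^n/ℤ⟨v_1 - v_j⟩` is free of rank
`1`; (c) the log-matrix has rank `n` and `ℤ⟨v_1 - v_j⟩ = ℤ⟨e_1 - e_k⟩`. -/
theorem stmt_6 (n q d : ℕ) [NeZero n] (hd : 2 ≤ d) (k : Type*) [Field k]
    (v : Fin (q + 1) → (Fin n →₀ ℕ)) (hv : Function.Injective v)
    (hdeg : ∀ j, ∑ i, v j i = d)
    (V : Submodule ℤ (Fin n → ℤ))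
    (hV : V = Submodule.span ℤ (Set.range fun j : Fin q =>
      (fun i => ((v 0) i : ℤ)) - (fun i => ((v j.succ) i : ℤ)))) :
    List.TFAE
      [ fractionFieldOf n k (Set.range fun j => monomial (v j) (1 : k)) =
          fractionFieldOf n k
            {p | ∃ w : Fin n →₀ ℕ, (∑ i, w i) = d ∧ p = monomial w (1 : k)},
        Module.Free ℤ ((Fin n → ℤ) ⧸ V) ∧
          Module.rank ℤ ((Fin n → ℤ) ⧸ V) = 1,
        (Matrix.of fun (i : Fin n) (j : Fin (q + 1)) => ((v j) i : ℚ) : Matrix (Fin n) (Fin (q + 1)) ℚ).rank = n ∧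
          V = Submodule.span ℤ
            {w : Fin n → ℤ | ∃ k' : Fin n, k' ≠ 0 ∧
              w = Pi.single 0 1 - Pi.single k' 1} ] := by
  classical
  have hd0 : d ≠ 0 := by omega
  have hWset : ({w : Fin n → ℤ | ∃ k' : Fin n, k' ≠ 0 ∧
      w = Pi.single 0 1 - Pi.single k' 1}) = Wset n := rfl
  -- coordinate sums of differences vanish
  have hsumdiff : ∀ j : Fin q, ∑ i, ((fun i => ((v 0) i : ℤ)) -
      (fun i => ((v j.succ) i : ℤ))) i = 0 := by
    intro j
    simp only [Pi.sub_apply]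
    rw [Finset.sum_sub_distrib]
    have h0 : ∑ i, ((v 0) i : ℤ) = (d : ℤ) := by
      rw [← Nat.cast_sum, hdeg 0]
    have h1 : ∑ i, ((v j.succ) i : ℤ) = (d : ℤ) := by
      rw [← Nat.cast_sum, hdeg j.succ]
    rw [h0, h1, sub_self]
  -- the key consequence of birationality
  have key : (fractionFieldOf n k (Set.range fun j => monomial (v j) (1 : k)) =
        fractionFieldOf n k
          {p | ∃ w : Fin n →₀ ℕ, (∑ i, w i) = d ∧ p = monomial w (1 : k)}) →
      ∀ w : Fin n →₀ ℕ, (∑ i, w i) = d →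
      ((fun i => (w i : ℤ)) - (fun i => ((v 0) i : ℤ))) ∈ Submodule.span ℤ
        (Set.range fun j : Fin q =>
          (fun i => ((v 0) i : ℤ)) - (fun i => ((v j.succ) i : ℤ))) := by
    intro h w hwdeg
    have hmem : (algebraMap (MvPolynomial (Fin n) k) (FractionRing (MvPolynomial (Fin n) k)))
        (monomial w (1:k)) ∈
        fractionFieldOf n k (Set.range fun j => monomial (v j) (1 : k)) := by
      rw [h]
      exact mem_fractionFieldOf_of_adjoin n k _ (Algebra.subset_adjoin ⟨w, hwdeg, rfl⟩)
    rw [mem_fractionFieldOf_iff] at hmem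
    obtain ⟨f, hf, g, hg, hfg⟩ := hmem
    have hm0 : (monomial w (1:k)) ≠ 0 := by
      intro h0
      have := congrArg (coeff w) h0
      simp at this
    have hg0 : g ≠ 0 := by
      rintro rfl
      rw [map_zero, div_zero] at hfg
      exact hm0 (iota_inj n k (by rw [map_zero, ← hfg]))
    have hgK : (algebraMap (MvPolynomial (Fin n) k) (FractionRing (MvPolynomial (Fin n) k))) g ≠ 0 := by
      intro h0
      exact hg0 (iota_inj n k (by rw [h0, map_zero]))
    have heq : f = monomial w (1:k) * g := by
      apply iota_inj n k
      rw [map_mul, ← hfg, div_mul_cancel₀ _ hgK]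
    obtain ⟨u, hu⟩ := Finset.nonempty_iff_ne_empty.mpr
      (fun h0 => hg0 (MvPolynomial.support_eq_empty.mp h0))
    have hfu : w + u ∈ f.support := by
      rw [MvPolynomial.mem_support_iff, heq, coeff_monomial_mul, one_mul]
      exact MvPolynomial.mem_support_iff.mp hu
    have hfM := support_adjoin_monomials n k v hf (w + u) hfu
    have huM := support_adjoin_monomials n k v hg u hu
    have hGf := cast_mem_span_of_closure n v hfM
    have hGu := cast_mem_span_of_closure n v huM
    have hcastw : (fun i => (w i : ℤ)) ∈ Submodule.span ℤ
        (Set.range fun j : Fin (q+1) => (fun i => ((v j) i : ℤ))) := by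
      have := Submodule.sub_mem _ hGf hGu
      have heq2 : (fun i => ((w + u : Fin n →₀ ℕ) i : ℤ)) - (fun i => (u i : ℤ))
          = (fun i => (w i : ℤ)) := by
        funext i
        simp only [Pi.sub_apply, Finsupp.coe_add, Pi.add_apply]
        push_cast
        ring
      rwa [heq2] at this
    have hx : ((fun i => (w i : ℤ)) - (fun i => ((v 0) i : ℤ))) ∈ Submodule.span ℤ
        (Set.range fun j : Fin (q+1) => (fun i => ((v j) i : ℤ))) :=
      Submodule.sub_mem _ hcastw (Submodule.subset_span ⟨0, rfl⟩)
    refine mem_diffspan_of_sum_zero n q d hd0 v hdeg _ hx ?_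
    simp only [Pi.sub_apply]
    rw [Finset.sum_sub_distrib, ← Nat.cast_sum, ← Nat.cast_sum, hwdeg, hdeg 0, sub_self]
  tfae_have 1 → 3 := by
    intro h
    have hVW : V = Submodule.span ℤ (Wset n) := by
      apply le_antisymm
      · rw [hV, Submodule.span_le]
        rintro x ⟨j, rfl⟩
        exact mem_spanW_of_sum_zero n _ (hsumdiff j)
      · rw [Submodule.span_le]
        rintro x ⟨k', hk', rfl⟩
        set w2 : Fin n →₀ ℕ := Finsupp.single 0 d with hw2
        set w1 : Fin n →₀ ℕ := Finsupp.single 0 (d-1) + Finsupp.single k' 1 with hw1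
        have hdeg2 : ∑ i, w2 i = d := by
          rw [hw2]
          simp [Finsupp.single_apply, Finset.sum_ite_eq]
        have hdeg1 : ∑ i, w1 i = d := by
          rw [hw1]
          simp only [Finsupp.coe_add, Pi.add_apply, Finsupp.single_apply]
          rw [Finset.sum_add_distrib]
          simp [Finset.sum_ite_eq]
          omega
        have h2 := key h w2 hdeg2
        have h1 := key h w1 hdeg1
        have hsub := Submodule.sub_mem _ h2 h1
        have hrw : ((fun i => (w2 i : ℤ)) - (fun i => ((v 0) i : ℤ))) -
            ((fun i => (w1 i : ℤ)) - (fun i => ((v 0) i : ℤ)))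
            = (Pi.single 0 1 - Pi.single k' 1 : Fin n → ℤ) := by
          funext i
          simp only [Pi.sub_apply, Pi.single_apply, hw2, hw1, Finsupp.coe_add,
            Pi.add_apply, Finsupp.single_apply]
          rcases eq_or_ne i 0 with h0 | h0
          · subst h0
            simp [Ne.symm hk']
            omega
          · rcases eq_or_ne i k' with hkk | hkk
            · subst hkk
              simp [h0, Ne.symm h0]
              ring
            · simp [h0, Ne.symm h0, hkk, Ne.symm hkk]
        rw [hrw] at hsub
        rw [hV]
        exact hsub
    refine ⟨?_, by rw [hVW, hWset]⟩
    exact rank_log_matrix n q d hd0 v hdeg (by rw [← hV, hVW])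
  tfae_have 3 → 1 := by
    rintro ⟨-, hVW'⟩
    have hVW : V = Submodule.span ℤ (Wset n) := by rw [hVW', hWset]
    apply le_antisymm
    · apply Subfield.closure_mono
      apply Set.image_mono
      have : Algebra.adjoin k (Set.range fun j => monomial (v j) (1 : k)) ≤
          Algebra.adjoin k {p | ∃ w : Fin n →₀ ℕ, (∑ i, w i) = d ∧ p = monomial w (1 : k)} := by
        apply Algebra.adjoin_mono
        rintro p ⟨j, rfl⟩
        exact ⟨v j, hdeg j, rfl⟩
      exact this
    · rw [fractionFieldOf]
      apply Subfield.closure_le.mpr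
      rintro y ⟨p, hp, rfl⟩
      induction hp using Algebra.adjoin_induction with
      | mem x hx =>
          obtain ⟨w, hwdeg, rfl⟩ := hx
          refine gen_mem_subfield n k v _ (fun j =>
            mem_fractionFieldOf_of_adjoin n k _ (Algebra.subset_adjoin
              (show monomial (v j) (1:k) ∈ Set.range fun j' => monomial (v j') (1:k) from
                ⟨j, rfl⟩))) w ?_
          have hsz : ∑ i, ((fun i => (w i : ℤ)) - (fun i => ((v 0) i : ℤ))) i = 0 := by
            simp only [Pi.sub_apply]
            rw [Finset.sum_sub_distrib, ← Nat.cast_sum, ← Nat.cast_sum, hwdeg, hdeg 0, sub_self]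
          have := mem_spanW_of_sum_zero n _ hsz
          rw [← hVW, hV] at this
          exact this
      | algebraMap r =>
          exact mem_fractionFieldOf_of_adjoin n k _ (Subalgebra.algebraMap_mem _ r)
      | add x y hx hy ihx ihy =>
          rw [RingHom.map_add]
          exact Subfield.add_mem _ ihx ihy
      | mul x y hx hy ihx ihy =>
          rw [RingHom.map_mul]
          exact Subfield.mul_mem _ ihx ihy
  tfae_have 3 → 2 := by
    rintro ⟨-, hVW'⟩
    have hVW : V = Submodule.span ℤ (Wset n) := by rw [hVW', hWset]
    have E := (Submodule.quotEquivOfEq V _ hVW).trans (quotWEquiv n)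
    exact ⟨Module.Free.of_equiv E.symm, by rw [E.rank_eq, Module.rank_self]⟩
  tfae_have 2 → 3 := by
    rintro ⟨hfree, hrank⟩
    have hle : V ≤ LinearMap.ker (sumHomZ n) := by
      rw [hV, Submodule.span_le]
      rintro x ⟨j, rfl⟩
      exact hsumdiff j
    set σ : ((Fin n → ℤ) ⧸ V) →ₗ[ℤ] ℤ := V.liftQ (sumHomZ n) hle with hσ
    have hsurj : Function.Surjective σ := by
      intro c
      obtain ⟨x, hx⟩ := sumHomZ_surjective n c
      exact ⟨Submodule.Quotient.mk x, by rw [hσ, Submodule.liftQ_apply, hx]⟩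
    have e := freeRankOneEquiv _ hfree hrank
    have hinjg : Function.Injective (σ.comp (e.symm : ℤ →ₗ[ℤ] ((Fin n → ℤ) ⧸ V))) := by
      apply int_surj_inj
      intro c
      obtain ⟨x, hx⟩ := hsurj c
      exact ⟨e x, by simp [LinearMap.comp_apply, hx]⟩
    have hinj : Function.Injective σ := by
      intro x y hxy
      apply e.injective
      apply hinjg
      simp [LinearMap.comp_apply, hxy]
    have hVW : V = Submodule.span ℤ (Wset n) := by
      apply le_antisymm
      · intro x hx
        exact mem_spanW_of_sum_zero n x (hle hx)
      · intro x hx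
        rw [spanW_eq_ker] at hx
        have h0 : σ (Submodule.Quotient.mk x) = 0 := by
          rw [hσ, Submodule.liftQ_apply]
          exact hx
        have := hinj (by rw [h0, map_zero] : σ (Submodule.Quotient.mk x) = σ 0)
        exact (Submodule.Quotient.mk_eq_zero V).mp this
    refine ⟨?_, by rw [hVW, hWset]⟩
    exact rank_log_matrix n q d hd0 v hdeg (by rw [← hV, hVW])
  tfae_finish
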